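/- Let q_n be a sequence of positive integers with q_n dividing q_{n+1} and q_n < q_{n+1} for all n, and let δ_n = 1/(3·q_{n+1}). Then for each N ≥ 1, the intersection over n ≥ N of the sets ((1/q_n)ℤ + D_{δ_n})/ℤ in ℝ/ℤ equals ((1/q_N)ℤ)/ℤ, where (1/q)ℤ + D_δ denotes all reals of the form k/q + t with k ∈ ℤ and |t| < δ. -/
import Mathlib


/-- For `q_n ∣ q_{n+1}`, `q_n < q_{n+1}` and `δ_n = 1/(3q_{n+1})`, the intersection over
`n ≥ N` of the `δ_n`-neighbourhoods of `(1/q_n)ℤ` in ℝ/ℤ equals `((1/q_N)ℤ)/ℤ`. -/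
theorem stmt15 (q : ℕ → ℕ) (hpos : ∀ n, 0 < q n) (hdvd : ∀ n, q n ∣ q (n + 1))
    (hlt : ∀ n, q n < q (n + 1)) (N : ℕ) (hN : 1 ≤ N) :
    (⋂ (n : ℕ) (_ : N ≤ n),
        {x : ℝ ⧸ AddSubgroup.zmultiples (1 : ℝ) | ∃ (k : ℤ) (t : ℝ),
          |t| < 1 / (3 * (q (n + 1) : ℝ)) ∧
          x = QuotientAddGroup.mk ((k : ℝ) / (q n : ℝ) + t)}) =
      {x : ℝ ⧸ AddSubgroup.zmultiples (1 : ℝ) | ∃ k : ℤ,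
        x = QuotientAddGroup.mk ((k : ℝ) / (q N : ℝ))} := by
  have hmono : ∀ n, n + 1 ≤ q n := by
    intro n
    induction n with
    | zero => exact hpos 0
    | succ n ih => exact Nat.succ_le_of_lt (lt_of_le_of_lt ih (hlt n))
  have hdvd' : ∀ m n, m ≤ n → q m ∣ q n := by
    intro m n h
    induction n with
    | zero => interval_cases m; exact dvd_rfl
    | succ n ih =>
      rcases Nat.lt_or_ge m (n + 1) with h' | h'
      · exact (ih (Nat.lt_succ_iff.mp h')).trans (hdvd n)
      · have : m = n + 1 := le_antisymm h h'
        subst this; exact dvd_rfl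
  have hq0 : ∀ n, (q n : ℝ) ≠ 0 := fun n => Nat.cast_ne_zero.mpr (hpos n).ne'
  have hqpos : ∀ n, (0 : ℝ) < q n := fun n => by exact_mod_cast hpos n
  ext x
  simp only [Set.mem_iInter, Set.mem_setOf_eq]
  constructor
  · intro hx
    obtain ⟨r, rfl⟩ := QuotientAddGroup.mk_surjective x
    have key : ∀ n, N ≤ n →
        ∃ (a : ℤ) (t : ℝ), |t| < 1 / (3 * (q (n + 1) : ℝ)) ∧ r = a / q n + t := by
      intro n hn
      obtain ⟨k, t, ht, heq⟩ := hx n hn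
      rw [QuotientAddGroup.eq] at heq
      obtain ⟨m, hm⟩ := AddSubgroup.mem_zmultiples_iff.mp heq
      rw [zsmul_eq_mul, mul_one] at hm
      refine ⟨k - m * q n, t, ht, ?_⟩
      push_cast
      rw [sub_div, mul_div_assoc, div_self (hq0 n), mul_one]
      linarith
    choose a t ht heq using key
    -- constancy of a n / q n and t n
    have const : ∀ n (hn : N ≤ n),
        (a n hn : ℝ) / q n = a N le_rfl / q N ∧ t n hn = t N le_rfl := by
      intro n hn
      induction n, hn using Nat.le_induction with
      | base => exact ⟨rfl, rfl⟩
      | succ n hn ih =>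
        obtain ⟨c, hc⟩ := hdvd n
        have hn1 : N ≤ n + 1 := le_trans hn (Nat.le_succ n)
        have hcpos : 0 < c := by
          rcases Nat.eq_zero_or_pos c with h | h
          · exfalso; rw [h, mul_zero] at hc; exact (hpos (n + 1)).ne' hc
          · exact h
        have hcR : ((q (n + 1) : ℝ)) = (q n : ℝ) * c := by exact_mod_cast hc
        have hsub : (a n hn : ℝ) / q n - (a (n + 1) hn1 : ℝ) / q (n + 1)
            = t (n + 1) hn1 - t n hn := by
          have h1 := heq n hn
          have h2 := heq (n + 1) hn1
          linarith
        set d : ℤ := a n hn * c - a (n + 1) hn1 with hd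
        have hdiv : (a n hn : ℝ) / q n = ((a n hn * (c : ℤ) : ℤ) : ℝ) / q (n + 1) := by
          rw [hcR]
          push_cast
          rw [mul_div_mul_right]
          exact_mod_cast hcpos.ne'
        have hdR : (d : ℝ) / q (n + 1) = t (n + 1) hn1 - t n hn := by
          push_cast [hd]
          rw [sub_div, ← hsub]
          push_cast [hdiv]
          ring
        -- bound |d| < 1
        have hq12 : (q (n + 1) : ℝ) ≤ q (n + 2) := by exact_mod_cast (hlt (n + 1)).le
        have ht1 := ht n hn
        have ht2 := ht (n + 1) hn1
        have hbound : |(d : ℝ)| < 1 := by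
          have h1 : |(d : ℝ) / q (n + 1)| < 2 / (3 * q (n + 1)) := by
            rw [hdR]
            have h2 : 1 / (3 * (q (n + 2) : ℝ)) ≤ 1 / (3 * q (n + 1)) := by
              apply one_div_le_one_div_of_le
              · have := hqpos (n + 1); linarith
              · linarith
            calc |t (n + 1) hn1 - t n hn| ≤ |t (n + 1) hn1| + |t n hn| := abs_sub _ _
              _ < 2 / (3 * q (n + 1)) := by
                  have h3 : |t (n + 1) hn1| < 1 / (3 * q (n + 1)) := lt_of_lt_of_le ht2 h2
                  have h5 : (1:ℝ) / (3 * q (n+1)) + 1 / (3 * q (n+1)) = 2 / (3 * q (n+1)) := by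
                    ring
                  linarith
          rw [abs_div, abs_of_pos (hqpos (n + 1))] at h1
          have h4 : |(d : ℝ)| < 2 / 3 := by
            rw [div_lt_div_iff₀ (hqpos (n + 1)) (by have := hqpos (n+1); linarith : (0:ℝ) < 3 * q (n + 1))] at h1
            nlinarith [hqpos (n + 1), abs_nonneg (d : ℝ)]
          linarith
        have hdz : d = 0 := by
          have h6 : |d| < 1 := by exact_mod_cast (by push_cast; exact hbound : (|d| : ℝ) < 1)
          have h7 := abs_lt.mp h6
          omega
        have haeq : (a (n + 1) hn1 : ℝ) / q (n + 1) = (a n hn : ℝ) / q n := by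
          have : (a (n + 1) hn1 : ℤ) = a n hn * c := by omega
          rw [this, ← hdiv]
        have hteq : t (n + 1) hn1 = t n hn := by
          have : (d : ℝ) = 0 := by exact_mod_cast hdz
          rw [this] at hdR
          have : (0:ℝ) / q (n+1) = 0 := zero_div _
          linarith [hdR, this]
        exact ⟨haeq.trans (ih.1), hteq.trans ih.2⟩
    -- t N = 0
    have htN : t N le_rfl = 0 := by
      by_contra h
      have habs : 0 < |t N le_rfl| := abs_pos.mpr h
      obtain ⟨n, hn⟩ := exists_nat_gt (1 / (3 * |t N le_rfl|))
      set m := max n N with hm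
      have hmN : N ≤ m := le_max_right _ _
      have h1 : |t N le_rfl| < 1 / (3 * q (m + 1)) := by
        rw [← (const m hmN).2]
        exact ht m hmN
      have h2 : (n : ℝ) ≤ q (m + 1) := by
        have h2a : n ≤ q (m + 1) := by have := hmono (m + 1); omega
        exact_mod_cast h2a
      have h3 : 1 / (3 * |t N le_rfl|) < (q (m + 1) : ℝ) := lt_of_lt_of_le hn h2
      have h4 : 1 / (3 * (q (m + 1) : ℝ)) < |t N le_rfl| := by
        rw [div_lt_iff₀ (by have := hqpos (m+1); linarith : (0:ℝ) < 3 * q (m + 1))]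
        rw [div_lt_iff₀ (by linarith : (0:ℝ) < 3 * |t N le_rfl|)] at h3
        nlinarith
      linarith
    refine ⟨a N le_rfl, ?_⟩
    rw [heq N le_rfl, htN, add_zero]
  · rintro ⟨k, rfl⟩ n hn
    obtain ⟨c, hc⟩ := hdvd' N n hn
    have hcpos : 0 < c := by
      rcases Nat.eq_zero_or_pos c with h | h
      · exfalso; rw [h, mul_zero] at hc; exact (hpos n).ne' hc
      · exact h
    refine ⟨k * c, 0, by
      rw [abs_zero]
      exact div_pos one_pos (by have := hqpos (n+1); linarith), ?_⟩
    congr 1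
    rw [add_zero]
    have hcR : ((q n : ℝ)) = (q N : ℝ) * c := by exact_mod_cast hc
    rw [hcR]
    push_cast
    rw [mul_div_mul_right]
    exact_mod_cast hcpos.ne'
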